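/- Let w be a rich word over an alphabet with q > 1 letters such that F(w,n+1) is closed under reversal, |w| ≥ n+1, and n > 0. Then |F(w,n)| ≤ 2(n−1)·(q+1)·n·(4·q¹⁰·n)^{log₂ n} − 2(n−1) + q. -/

import Mathlib

namespace RichWords

/-- A word over the alphabet `A`: either finite or infinite. -/
inductive Word (A : Type*) where
  | fin : List A → Word A
  | inf : (ℕ → A) → Word A

/-- `w.Factor u` : the finite word `u` is a factor of the word `w`. -/
def Word.Factor {A : Type*} : Word A → List A → Prop
  | .fin v, u => u <:+: v
  | .inf f, u => ∃ i : ℕ, u = List.ofFn (fun j : Fin u.length => f (i + (j : ℕ)))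

/-- `F w n` : the set of factors of length `n` of the word `w`. -/
def F {A : Type*} (w : Word A) (n : ℕ) : Set (List A) :=
  {u | w.Factor u ∧ u.length = n}

/-- `Fp w n` : the set of palindromic factors of length `n` of the word `w`. -/
def Fp {A : Type*} (w : Word A) (n : ℕ) : Set (List A) :=
  {u | u ∈ F w n ∧ u.reverse = u}

/-- A finite word of length `m` is rich if it contains `m + 1` distinct palindromic
factors (the empty word included). -/
def RichList {A : Type*} (v : List A) : Prop :=
  {u | u <:+: v ∧ u.reverse = u}.ncard = v.length + 1

/-- A word (finite or infinite) is rich: a finite word is rich as above, and an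
infinite word is rich if every finite factor of it is rich. -/
def Word.Rich {A : Type*} : Word A → Prop
  | .fin v => RichList v
  | .inf f => ∀ u : List A, (Word.inf f).Factor u → RichList u

/-- `gamma w n` : the set of `u`-switches of length `n` of `w`, i.e. factors of the
form `a u b` with `a ≠ b` letters and `u` a palindrome; empty for `n ≤ 2`. -/
def gamma {A : Type*} (w : Word A) (n : ℕ) : Set (List A) :=
  {v | 2 < n ∧ v ∈ F w n ∧
    ∃ (a b : A) (u : List A), a ≠ b ∧ v = a :: (u ++ [b]) ∧ u.reverse = u}

/-- `gammaBar w n` : the set of pairs `(u, c)` such that `a u b ∈ gamma w n`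
for some letters `a ≠ b` with `c ∈ {a, b}`. -/
def gammaBar {A : Type*} (w : Word A) (n : ℕ) : Set (List A × A) :=
  {p | ∃ a b : A, a ≠ b ∧ (a :: (p.1 ++ [b])) ∈ gamma w n ∧ (p.2 = a ∨ p.2 = b)}

/-- `Gam w n = max {1, max {|gamma w i| : 0 ≤ i ≤ n}}`. -/
noncomputable def Gam {A : Type*} (w : Word A) (n : ℕ) : ℕ :=
  max 1 ((Finset.range (n + 1)).sup fun i => (gamma w i).ncard)

/-- `trim v` removes the first and the last letter of `v`. -/
def trim {A : Type*} (v : List A) : List A := (v.drop 1).dropLast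

/-- `IsLpps u r` : `r` is the longest proper palindromic suffix of `u`
(for `|u| ≤ 1` it is the empty word). -/
def IsLpps {A : Type*} (u r : List A) : Prop :=
  if u.length ≤ 1 then r = []
  else r <:+ u ∧ r.reverse = r ∧ r ≠ u ∧
    ∀ s : List A, s <:+ u → s.reverse = s → s ≠ u → s.length ≤ r.length





section Aux
open List
open scoped Classical

variable {A : Type*}

lemma finite_infixes (w : List A) : {u : List A | u <:+: w}.Finite := by
  apply Set.Finite.subset (((Set.finite_Iic w.length).prod (Set.finite_Iic w.length)).image
    (fun p : ℕ × ℕ => (w.drop p.1).take p.2))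
  rintro u ⟨s, t, rfl⟩
  refine ⟨(s.length, u.length), ⟨?_, ?_⟩, ?_⟩
  · simp only [Set.mem_Iic, List.length_append]; omega
  · simp only [Set.mem_Iic, List.length_append]; omega
  · show ((s ++ u ++ t).drop s.length).take u.length = u
    rw [List.append_assoc, List.drop_left, List.take_left]

lemma suffix_take_of_infix {u w : List A} (h : u <:+: w) :
    ∃ e, e ≤ w.length ∧ u <:+ w.take e := by
  obtain ⟨s, t, rfl⟩ := h
  refine ⟨s.length + u.length, by simp only [List.length_append]; omega, ?_⟩
  rw [List.append_assoc, ← List.append_assoc,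
    List.take_left' (by simp : (s ++ u).length = s.length + u.length)]
  exact List.suffix_append s u

lemma infix_of_suffix_take {u w : List A} {e : ℕ} (h : u <:+ w.take e) : u <:+: w :=
  h.isInfix.trans (List.take_prefix e w).isInfix

lemma take_take_of_le {w : List A} {e e' : ℕ} (hee : e ≤ e') :
    (w.take e').take e = w.take e := by
  rw [List.take_take, inf_eq_left.mpr hee]

lemma infix_take_mono {u w : List A} {e e' : ℕ} (hee : e ≤ e') (h : u <:+ w.take e) :
    u <:+: w.take e' := by
  rw [← take_take_of_le hee] at h
  exact h.isInfix.trans (List.take_prefix _ _).isInfix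

lemma suffix_eq_of_length {u v l : List A} (h1 : u <:+ l) (h2 : v <:+ l)
    (h : u.length = v.length) : u = v := by
  obtain ⟨a, rfl⟩ := h1
  obtain ⟨b, hb⟩ := h2
  have hlen : b.length = a.length := by
    have := congrArg List.length hb
    simp only [List.length_append] at this; omega
  exact ((List.append_inj hb hlen).2).symm

lemma suffix_of_suffix_of_le {u r l : List A} (h1 : u <:+ l) (h2 : r <:+ l)
    (h : u.length ≤ r.length) : u <:+ r := by
  obtain ⟨a, rfl⟩ := h1
  obtain ⟨b, hb⟩ := h2
  have hlen : b.length ≤ a.length := by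
    have := congrArg List.length hb
    simp only [List.length_append] at this; omega
  have ha : a = a.take b.length ++ a.drop b.length := (List.take_append_drop _ _).symm
  have heq : b ++ r = a.take b.length ++ (a.drop b.length ++ u) := by
    rw [← List.append_assoc, ← ha, hb]
  have h2' := List.append_inj heq (by simp only [List.length_take]; omega)
  exact ⟨a.drop b.length, h2'.2.symm⟩

/-- longest palindromic suffix -/
noncomputable def lps (v : List A) : List A :=
  ((v.tails.filter fun u => decide (u.reverse = u)).argmax List.length).getD []

lemma lps_spec (v : List A) :
    (v.tails.filter fun u => decide (u.reverse = u)).argmax List.length = some (lps v) := by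
  unfold lps
  cases h : (v.tails.filter fun u => decide (u.reverse = u)).argmax List.length with
  | none =>
    exfalso
    rw [List.argmax_eq_none] at h
    have : ([] : List A) ∈ v.tails.filter fun u => decide (u.reverse = u) := by
      rw [List.mem_filter]
      exact ⟨(List.mem_tails _ _).mpr (List.nil_suffix), by simp⟩
    rw [h] at this
    simp at this
  | some r => rfl

lemma lps_mem_filter (v : List A) :
    lps v ∈ v.tails.filter fun u => decide (u.reverse = u) :=
  List.argmax_mem (lps_spec v)

lemma lps_suffix (v : List A) : lps v <:+ v := by
  have := lps_mem_filter v
  rw [List.mem_filter] at this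
  exact (List.mem_tails _ _).mp this.1

lemma lps_palindrome (v : List A) : (lps v).reverse = lps v := by
  have := lps_mem_filter v
  rw [List.mem_filter] at this
  simpa using this.2

lemma lps_longest {v s : List A} (hs : s <:+ v) (hp : s.reverse = s) :
    s.length ≤ (lps v).length := by
  refine List.le_of_mem_argmax ?_ (lps_spec v)
  rw [List.mem_filter]
  exact ⟨(List.mem_tails _ _).mpr hs, by simp [hp]⟩

lemma lps_length_pos {v : List A} (hv : v ≠ []) : 0 < (lps v).length := by
  have h1 : [v.getLast hv] <:+ v := ⟨v.dropLast, List.dropLast_append_getLast hv⟩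
  have := lps_longest h1 (by simp)
  simpa using Nat.lt_of_lt_of_le Nat.zero_lt_one this

/-- first occurrence end -/
noncomputable def foe (w u : List A) : ℕ := sInf {e | u <:+ w.take e}

lemma foe_suffix {w u : List A} (hu : u <:+: w) : u <:+ w.take (foe w u) := by
  obtain ⟨e, _, he⟩ := suffix_take_of_infix hu
  exact Nat.sInf_mem (⟨e, he⟩ : {e | u <:+ w.take e}.Nonempty)

lemma foe_le {w u : List A} (hu : u <:+: w) : foe w u ≤ w.length := by
  obtain ⟨e, he1, he2⟩ := suffix_take_of_infix hu
  exact le_trans (Nat.sInf_le he2) he1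

lemma foe_min {w u : List A} {e : ℕ} (h : e < foe w u) : ¬ u <:+ w.take e :=
  Nat.notMem_of_lt_sInf h

lemma foe_le_of_suffix {w u : List A} {e : ℕ} (h : u <:+ w.take e) : foe w u ≤ e :=
  Nat.sInf_le h

lemma length_le_foe {w u : List A} (hu : u <:+: w) : u.length ≤ foe w u := by
  have h := (foe_suffix hu).length_le
  simp only [List.length_take] at h
  omega

end Aux


section Rich
open List
open scoped Classical

variable {A : Type*}

/-- palindromic factors of the prefix of length `e` -/
def PalSet (w : List A) (e : ℕ) : Set (List A) :=
  {u | u <:+: w.take e ∧ u.reverse = u}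

lemma PalSet_finite (w : List A) (e : ℕ) : (PalSet w e).Finite :=
  (finite_infixes w).subset (fun u hu => hu.1.trans (List.take_prefix e w).isInfix)

lemma PalSet_mono {w : List A} {e e' : ℕ} (h : e ≤ e') : PalSet w e ⊆ PalSet w e' := by
  rintro u ⟨h1, h2⟩
  refine ⟨h1.trans ?_, h2⟩
  have h3 := (List.take_prefix e (w.take e')).isInfix
  rwa [take_take_of_le h] at h3

lemma PalSet_succ_subset (w : List A) (e : ℕ) :
    PalSet w (e + 1) ⊆ PalSet w e ∪ {lps (w.take (e + 1))} := by
  rintro u ⟨h1, h2⟩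
  obtain ⟨j, hj1, hj2⟩ := suffix_take_of_infix h1
  rw [List.length_take] at hj1
  rw [take_take_of_le (le_trans hj1 (min_le_left _ _))] at hj2
  rcases Nat.lt_or_ge j (e + 1) with hj | hj
  · exact Or.inl ⟨infix_take_mono (by omega) hj2, h2⟩
  -- j = e+1, so u is a palindromic suffix of w.take (e+1)
  have hje : j = e + 1 := le_antisymm (le_trans hj1 (min_le_left _ _)) hj
  subst hje
  by_cases hu : u = lps (w.take (e + 1))
  · exact Or.inr (by simp [hu])
  · -- u is a shorter palindromic suffix; it occurs earlier inside lps
    left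
    set v := w.take (e + 1) with hv
    set r := lps v with hr
    have hlen : u.length ≤ r.length := lps_longest hj2 h2
    have hne : u.length ≠ r.length := fun h =>
      hu (suffix_eq_of_length hj2 (lps_suffix v) h)
    have husuf : u <:+ r := suffix_of_suffix_of_le hj2 (lps_suffix v) hlen
    have hupre : u <+: r := by
      have := List.reverse_prefix.mpr husuf
      rwa [h2, lps_palindrome] at this
    obtain ⟨y, hy⟩ := hupre
    obtain ⟨b, hb⟩ := lps_suffix v
    -- v = b ++ u ++ y
    have hvb : v = b ++ u ++ y := by rw [List.append_assoc, hy, hb]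
    have hylen : 1 ≤ y.length := by
      have := congrArg List.length hy
      simp only [List.length_append] at this
      omega
    have hvlen : v.length ≤ e + 1 := by
      rw [hv, List.length_take]; exact min_le_left _ _
    have hk : b.length + u.length ≤ e := by
      have := congrArg List.length hvb
      simp only [List.length_append] at this
      omega
    have hsu : u <:+ w.take (b.length + u.length) := by
      have h8 : v.take (b.length + u.length) = b ++ u := by
        rw [hvb, List.take_left' (by simp)]
      have h9 : w.take (b.length + u.length) = b ++ u := by
        rw [← h8, hv, take_take_of_le (by omega)]
      rw [h9]
      exact List.suffix_append b u
    exact ⟨infix_take_mono hk hsu, h2⟩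

lemma PalSet_zero (w : List A) : PalSet w 0 = {([] : List A)} := by
  ext u
  simp [PalSet, List.infix_nil]
  intro h; subst h; simp

lemma PalSet_card_le (w : List A) (e : ℕ) : (PalSet w e).ncard ≤ e + 1 := by
  induction e with
  | zero => rw [PalSet_zero]; simp
  | succ e ih =>
    have h1 := Set.ncard_le_ncard (PalSet_succ_subset w e)
      (((PalSet_finite w e).union (Set.finite_singleton _)))
    have h2 := Set.ncard_union_le (PalSet w e) {lps (w.take (e + 1))}
    have h3 : ({lps (w.take (e+1))} : Set (List A)).ncard = 1 := Set.ncard_singleton _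
    omega

lemma PalSet_card_eq {w : List A} (hw : RichList w) {e : ℕ} (he : e ≤ w.length) :
    (PalSet w e).ncard = e + 1 := by
  have htop : (PalSet w w.length).ncard = w.length + 1 := by
    have : PalSet w w.length = {u | u <:+: w ∧ u.reverse = u} := by
      rw [PalSet, List.take_length]
    rw [this]; exact hw
  have hstep : ∀ a b : ℕ, (PalSet w (a + b)).ncard ≤ (PalSet w a).ncard + b := by
    intro a b
    induction b with
    | zero => simp
    | succ b ih =>
      have h1 := Set.ncard_le_ncard (PalSet_succ_subset w (a + b))
        (((PalSet_finite w (a+b)).union (Set.finite_singleton _)))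
      have h2 := Set.ncard_union_le (PalSet w (a+b)) {lps (w.take (a + b + 1))}
      have h3 : ({lps (w.take (a+b+1))} : Set (List A)).ncard = 1 := Set.ncard_singleton _
      have : a + (b+1) = (a + b) + 1 := by omega
      rw [this]
      omega
  have hlow := hstep e (w.length - e)
  rw [show e + (w.length - e) = w.length by omega, htop] at hlow
  have := PalSet_card_le w e
  omega

lemma lps_not_infix {w : List A} (hw : RichList w) {e : ℕ} (he : e < w.length) :
    ¬ (lps (w.take (e + 1)) <:+: w.take e) := by
  intro hcon
  have hsub : PalSet w (e + 1) ⊆ PalSet w e := by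
    intro u hu
    rcases PalSet_succ_subset w e hu with h | h
    · exact h
    · rw [Set.mem_singleton_iff] at h
      subst h
      exact ⟨hcon, lps_palindrome _⟩
  have h1 := Set.ncard_le_ncard hsub (PalSet_finite w e)
  rw [PalSet_card_eq hw (by omega), PalSet_card_eq hw (by omega)] at h1
  omega

end Rich
section Count
open List
open scoped Classical

variable {A : Type*}

lemma F_finite (w : List A) (m : ℕ) : (F (Word.fin w) m).Finite :=
  (finite_infixes w).subset (fun u hu => hu.1)

lemma Fp_finite (w : List A) (m : ℕ) : (Fp (Word.fin w) m).Finite :=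
  (F_finite w m).subset (fun u hu => hu.1)

lemma palLE_ncard_le (w : List A) (m : ℕ) :
    {p : List A | p <:+: w ∧ p.reverse = p ∧ 1 ≤ p.length ∧ p.length ≤ m}.ncard
      ≤ ∑ k ∈ Finset.Icc 1 m, (Fp (Word.fin w) k).ncard := by
  induction m with
  | zero =>
    have h0 : {p : List A | p <:+: w ∧ p.reverse = p ∧ 1 ≤ p.length ∧ p.length ≤ 0} = ∅ := by
      ext p
      constructor
      · rintro ⟨_, _, h3, h4⟩; omega
      · intro h; exact h.elim
    rw [h0]
    simp
  | succ m ih =>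
    have hsub : {p : List A | p <:+: w ∧ p.reverse = p ∧ 1 ≤ p.length ∧ p.length ≤ m + 1}
        ⊆ {p : List A | p <:+: w ∧ p.reverse = p ∧ 1 ≤ p.length ∧ p.length ≤ m}
          ∪ Fp (Word.fin w) (m + 1) := by
      rintro p ⟨h1, h2, h3, h4⟩
      rcases Nat.lt_or_ge p.length (m + 1) with h | h
      · exact Or.inl ⟨h1, h2, h3, by omega⟩
      · exact Or.inr ⟨⟨h1, by omega⟩, h2⟩
    have hf1 : {p : List A | p <:+: w ∧ p.reverse = p ∧ 1 ≤ p.length ∧ p.length ≤ m}.Finite :=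
      (finite_infixes w).subset fun p hp => hp.1
    have h1 := Set.ncard_le_ncard hsub (hf1.union (Fp_finite w (m + 1)))
    have h2 := Set.ncard_union_le
      {p : List A | p <:+: w ∧ p.reverse = p ∧ 1 ≤ p.length ∧ p.length ≤ m}
      (Fp (Word.fin w) (m + 1))
    rw [Finset.sum_Icc_succ_top (by omega)]
    omega

lemma ncard_F_le_two_sum {w : List A} (hw : RichList w) {m : ℕ} (hm : 1 ≤ m) :
    (F (Word.fin w) m).ncard ≤ 2 * ∑ k ∈ Finset.Icc 1 m, (Fp (Word.fin w) k).ncard := by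
  set Fm := F (Word.fin w) m with hFm
  set AA := {u ∈ Fm | (lps (w.take (foe w u))).length ≤ m} with hAA
  set BB := {u ∈ Fm | ¬ (lps (w.take (foe w u))).length ≤ m} with hBB
  have hFmfin : Fm.Finite := F_finite w m
  have hAfin : AA.Finite := hFmfin.subset (Set.sep_subset _ _)
  have hBfin : BB.Finite := hFmfin.subset (Set.sep_subset _ _)
  have hunion : AA ∪ BB = Fm := by
    ext u
    constructor
    · rintro (⟨h, _⟩ | ⟨h, _⟩) <;> exact h
    · intro hu
      by_cases h : (lps (w.take (foe w u))).length ≤ m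
      · exact Or.inl ⟨hu, h⟩
      · exact Or.inr ⟨hu, h⟩
  have hdisj : Disjoint AA BB := by
    rw [Set.disjoint_left]
    rintro u ⟨_, h1⟩ ⟨_, h2⟩
    exact h2 h1
  -- Case A
  have hA : AA.ncard ≤ ∑ k ∈ Finset.Icc 1 m, (Fp (Word.fin w) k).ncard := by
    refine le_trans (Set.ncard_le_ncard_of_injOn (fun u => lps (w.take (foe w u))) ?_ ?_
      ((finite_infixes w).subset fun p hp => hp.1)) (palLE_ncard_le w m)
    · rintro u ⟨⟨hu1, hu2⟩, hu3⟩
      have he1 : 1 ≤ foe w u := le_trans (by omega) (length_le_foe hu1)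
      have heN : foe w u ≤ w.length := foe_le hu1
      have hne : w.take (foe w u) ≠ [] := by
        intro hc
        have := congrArg List.length hc
        simp only [List.length_take, List.length_nil] at this
        omega
      exact ⟨infix_of_suffix_take (lps_suffix (w.take (foe w u))), lps_palindrome _,
        lps_length_pos hne, hu3⟩
    · rintro u1 ⟨⟨hu11, hu12⟩, hu13⟩ u2 ⟨⟨hu21, hu22⟩, hu23⟩ heq
      simp only at heq
      rcases lt_trichotomy (foe w u1) (foe w u2) with h | h | h
      · exfalso
        have he2 : 1 ≤ foe w u2 := le_trans (by omega) (length_le_foe hu21)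
        have hnew := lps_not_infix hw (show foe w u2 - 1 < w.length by
          have := foe_le hu21; omega)
        rw [show foe w u2 - 1 + 1 = foe w u2 by omega] at hnew
        apply hnew
        rw [← heq]
        exact infix_take_mono (by omega) (lps_suffix (w.take (foe w u1)))
      · have s1 := foe_suffix hu11
        have s2 := foe_suffix hu21
        rw [← h] at s2
        exact suffix_eq_of_length s1 s2 (by omega)
      · exfalso
        have he1 : 1 ≤ foe w u1 := le_trans (by omega) (length_le_foe hu11)
        have hnew := lps_not_infix hw (show foe w u1 - 1 < w.length by
          have := foe_le hu11; omega)
        rw [show foe w u1 - 1 + 1 = foe w u1 by omega] at hnew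
        apply hnew
        rw [heq]
        exact infix_take_mono (by omega) (lps_suffix (w.take (foe w u2)))
  -- Case B
  have hkey : ∀ u ∈ BB, (u.reverse ∈ Fm ∧ foe w u.reverse < foe w u) := by
    rintro u ⟨⟨hu1, hu2⟩, hu3⟩
    push_neg at hu3
    have heN : foe w u ≤ w.length := foe_le hu1
    have hes : u <:+ w.take (foe w u) := foe_suffix hu1
    have hrs : lps (w.take (foe w u)) <:+ w.take (foe w u) := lps_suffix _
    have hrp : (lps (w.take (foe w u))).reverse = lps (w.take (foe w u)) := lps_palindrome _
    have husuf : u <:+ lps (w.take (foe w u)) :=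
      suffix_of_suffix_of_le hes hrs (by omega)
    have hupre : u.reverse <+: lps (w.take (foe w u)) := by
      have h6 := List.reverse_prefix.mpr husuf
      rwa [hrp] at h6
    obtain ⟨y, hy⟩ := hupre
    obtain ⟨b, hb⟩ := hrs
    have hvb : w.take (foe w u) = b ++ u.reverse ++ y := by
      rw [List.append_assoc, hy, hb]
    have hrlen : (lps (w.take (foe w u))).length = u.length + y.length := by
      have := congrArg List.length hy
      simp only [List.length_append, List.length_reverse] at this
      omega
    have hwtlen : (w.take (foe w u)).length ≤ foe w u := by
      rw [List.length_take]; exact min_le_left _ _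
    have hk : b.length + m < foe w u := by
      have h7 := congrArg List.length hvb
      simp only [List.length_append, List.length_reverse] at h7
      omega
    have hsu : u.reverse <:+ w.take (b.length + m) := by
      have h8 : (w.take (foe w u)).take (b.length + m) = b ++ u.reverse := by
        rw [hvb]
        exact List.take_left' (by simp [hu2])
      rw [← take_take_of_le (show b.length + m ≤ foe w u by omega), h8]
      exact List.suffix_append b u.reverse
    exact ⟨⟨infix_of_suffix_take hsu, by simp [hu2]⟩,
      lt_of_le_of_lt (foe_le_of_suffix hsu) hk⟩
  have hrevB : ∀ u ∈ BB, u.reverse ≠ u := by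
    intro u hu h
    have h2 := (hkey u hu).2
    rw [h] at h2
    omega
  set BB' := List.reverse '' BB with hBB'
  have hBfin' : BB'.Finite := hBfin.image _
  have hBcard : BB'.ncard = BB.ncard := Set.ncard_image_of_injective _ List.reverse_injective
  have hBsub : BB ⊆ Fm := Set.sep_subset _ _
  have hBsub' : BB' ⊆ Fm := by
    rintro x ⟨u, hu, rfl⟩
    exact (hkey u hu).1
  have hFpsub : Fp (Word.fin w) m ⊆ Fm := fun u hu => hu.1
  have hd1 : Disjoint BB BB' := by
    rw [Set.disjoint_left]
    rintro x hx ⟨u, hu, rfl⟩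
    have h1 := (hkey _ hx).2
    have h2 := (hkey u hu).2
    rw [List.reverse_reverse] at h1
    omega
  have hd2 : Disjoint BB (Fp (Word.fin w) m) := by
    rw [Set.disjoint_left]
    intro x hx hx2
    exact hrevB x hx hx2.2
  have hd3 : Disjoint BB' (Fp (Word.fin w) m) := by
    rw [Set.disjoint_left]
    rintro x ⟨u, hu, rfl⟩ hx2
    apply hrevB u hu
    have h9 := hx2.2
    rw [List.reverse_reverse] at h9
    exact h9.symm
  have hcount : BB.ncard + BB'.ncard + (Fp (Word.fin w) m).ncard ≤ Fm.ncard := by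
    have e1 : (BB ∪ BB' ∪ Fp (Word.fin w) m).ncard
        = BB.ncard + BB'.ncard + (Fp (Word.fin w) m).ncard := by
      rw [Set.ncard_union_eq (by rw [Set.disjoint_union_left]; exact ⟨hd2, hd3⟩)
        (hBfin.union hBfin') (Fp_finite w m),
        Set.ncard_union_eq hd1 hBfin hBfin']
    rw [← e1]
    refine Set.ncard_le_ncard ?_ hFmfin
    rintro x ((h | h) | h)
    exacts [hBsub h, hBsub' h, hFpsub h]
  have hsplit : AA.ncard + BB.ncard = Fm.ncard := by
    rw [← Set.ncard_union_eq hdisj hAfin hBfin, hunion]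
  omega

end Count

section Final
open List
open scoped Classical

variable {A : Type*}

lemma Fp_ncard_le_half (w : List A) {k : ℕ} (hk : 1 ≤ k) :
    (Fp (Word.fin w) k).ncard ≤ (F (Word.fin w) ((k + 1) / 2)).ncard := by
  set h := (k + 1) / 2 with hh
  have hhk : h ≤ k := by omega
  have hkh : k - h ≤ h := by omega
  refine Set.ncard_le_ncard_of_injOn (fun u => u.take h) ?_ ?_ (F_finite w _)
  · rintro u ⟨⟨hu1, hu2⟩, hu3⟩
    refine ⟨(List.take_prefix h u).isInfix.trans hu1, ?_⟩
    rw [List.length_take, hu2]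
    omega
  · have recon : ∀ x, x ∈ Fp (Word.fin w) k → x = x.take h ++ ((x.take h).take (k - h)).reverse := by
      rintro x ⟨⟨hx1, hx2⟩, hx3⟩
      conv_lhs => rw [← List.take_append_drop h x]
      congr 1
      have h1 : (x.take (k - h)).reverse = x.drop h := by
        rw [List.reverse_take, hx3, hx2, show k - (k - h) = h by omega]
      have h2 : x.take (k - h) = (x.take h).take (k - h) := by
        rw [List.take_take, inf_eq_left.mpr hkh]
      rw [← h2, ← h1]
    intro u hu v hv heq
    simp only at heq
    rw [recon u hu, recon v hv, heq]

lemma ncard_F_one_le (w : List A) [Fintype A] [Nonempty A] :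
    (F (Word.fin w) 1).ncard ≤ Fintype.card A := by
  letI : Inhabited A := ⟨Classical.arbitrary A⟩
  have h1 : (F (Word.fin w) 1).ncard ≤ (Set.univ : Set A).ncard := by
    refine Set.ncard_le_ncard_of_injOn (fun u => u.headI) (fun u _ => Set.mem_univ _) ?_
      Set.finite_univ
    rintro u ⟨_, hu⟩ v ⟨_, hv⟩ heq
    obtain ⟨a, rfl⟩ := List.length_eq_one_iff.mp hu
    obtain ⟨b, rfl⟩ := List.length_eq_one_iff.mp hv
    simpa using heq
  rwa [Set.ncard_univ, Nat.card_eq_fintype_card] at h1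

/-- max of complexities up to `j` -/
noncomputable def GG (w : List A) (j : ℕ) : ℕ :=
  (Finset.Icc 1 j).sup fun i => (F (Word.fin w) i).ncard

lemma C_le_GG (w : List A) {i j : ℕ} (h1 : 1 ≤ i) (h2 : i ≤ j) :
    (F (Word.fin w) i).ncard ≤ GG w j := by
  exact Finset.le_sup (f := fun i => (F (Word.fin w) i).ncard) (Finset.mem_Icc.mpr ⟨h1, h2⟩)

lemma GG_rec {w : List A} (hw : RichList w) {m : ℕ} (hm : 1 ≤ m) :
    GG w m ≤ 2 * m * GG w ((m + 1) / 2) := by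
  apply Finset.sup_le
  intro i hi
  rw [Finset.mem_Icc] at hi
  calc (F (Word.fin w) i).ncard
      ≤ 2 * ∑ k ∈ Finset.Icc 1 i, (Fp (Word.fin w) k).ncard := ncard_F_le_two_sum hw hi.1
    _ ≤ 2 * ∑ k ∈ Finset.Icc 1 i, GG w ((m + 1) / 2) := by
        refine Nat.mul_le_mul_left 2 (Finset.sum_le_sum ?_)
        intro k hk
        rw [Finset.mem_Icc] at hk
        refine le_trans (Fp_ncard_le_half w hk.1) (C_le_GG w (by omega) ?_)
        have : k ≤ m := le_trans hk.2 hi.2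
        omega
    _ = 2 * (i * GG w ((m + 1) / 2)) := by
        rw [Finset.sum_const, Nat.card_Icc, smul_eq_mul, Nat.add_sub_cancel]
    _ ≤ 2 * m * GG w ((m + 1) / 2) := by
        rw [mul_assoc]
        exact Nat.mul_le_mul_left 2 (Nat.mul_le_mul_right _ hi.2)

lemma GG_bound {w : List A} [Fintype A] [Nonempty A] (hw : RichList w) :
    ∀ m : ℕ, 1 ≤ m → GG w m ≤ Fintype.card A * (2 * m) ^ (Nat.clog 2 m) := by
  intro m
  induction m using Nat.strong_induction_on with
  | _ m IH =>
    intro hm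
    rcases eq_or_lt_of_le hm with h1 | h2
    · -- m = 1
      rw [← h1]
      simp only [Nat.clog_one_right, pow_zero, mul_one]
      have : GG w 1 = (F (Word.fin w) 1).ncard := by
        rw [GG, show Finset.Icc 1 1 = {1} from rfl, Finset.sup_singleton]
      rw [this]
      exact ncard_F_one_le w
    · -- 2 ≤ m
      have hm2 : 2 ≤ m := h2
      have hm'1 : 1 ≤ (m + 1) / 2 := by omega
      have hm'2 : (m + 1) / 2 < m := by omega
      have hrec := GG_rec hw hm
      have hIH := IH _ hm'2 hm'1
      have hc : Nat.clog 2 m = Nat.clog 2 ((m + 1) / 2) + 1 := by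
        rw [Nat.clog_of_two_le one_lt_two hm2, show m + 2 - 1 = m + 1 by omega]
      calc GG w m ≤ 2 * m * GG w ((m + 1) / 2) := hrec
        _ ≤ 2 * m * (Fintype.card A * (2 * ((m + 1) / 2)) ^ Nat.clog 2 ((m + 1) / 2)) :=
            Nat.mul_le_mul_left _ hIH
        _ ≤ 2 * m * (Fintype.card A * (2 * m) ^ Nat.clog 2 ((m + 1) / 2)) := by
            refine Nat.mul_le_mul_left _ (Nat.mul_le_mul_left _ (Nat.pow_le_pow_left ?_ _))
            omega
        _ = Fintype.card A * (2 * m) ^ (Nat.clog 2 ((m + 1) / 2) + 1) := by ring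
        _ = Fintype.card A * (2 * m) ^ Nat.clog 2 m := by rw [hc]

end Final

/-- If `w` is a rich word over an alphabet with `q > 1` letters with
`F(w, n+1)` closed under reversal, `|w| ≥ n + 1` and `n > 0`, then
`|F(w,n)| ≤ 2(n-1)(q+1) n (4 q¹⁰ n) ^ (log₂ n) - 2(n-1) + q`. -/
theorem factor_complexity_closed_bound {A : Type*} [Fintype A] (hq : 1 < Fintype.card A)
    (w : List A) (hw : RichList w) (n : ℕ) (hn : 0 < n) (hlen : n + 1 ≤ w.length)
    (hcl : ∀ u ∈ F (Word.fin w) (n + 1), u.reverse ∈ F (Word.fin w) (n + 1)) :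
    ((F (Word.fin w) n).ncard : ℝ)
      ≤ 2 * ((n : ℝ) - 1) * ((Fintype.card A : ℝ) + 1) * n
            * (4 * (Fintype.card A : ℝ) ^ 10 * n) ^ Real.logb 2 n
        - 2 * ((n : ℝ) - 1) + (Fintype.card A : ℝ) := by
  haveI : Nonempty A := Fintype.card_pos_iff.mp (by omega)
  set q := Fintype.card A with hqdef
  have hq2 : 2 ≤ q := hq
  have hC : (F (Word.fin w) n).ncard ≤ q * (2 * n) ^ (Nat.clog 2 n) :=
    le_trans (C_le_GG w hn le_rfl) (GG_bound hw n hn)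
  rcases eq_or_lt_of_le (show 1 ≤ n from hn) with h1 | hn2
  · -- n = 1
    rw [← h1] at hC ⊢
    simp only [Nat.clog_one_right, pow_zero, mul_one] at hC
    have hC' : ((F (Word.fin w) 1).ncard : ℝ) ≤ (q : ℝ) := by exact_mod_cast hC
    push_cast
    have hz : ∀ B : ℝ, 2 * ((1:ℝ) - 1) * ((q:ℝ) + 1) * 1 * B - 2 * ((1:ℝ) - 1) + q = q :=
      fun B => by ring
    rw [hz]
    exact hC'
  · -- 2 ≤ n
    have hn2' : (2:ℝ) ≤ (n:ℝ) := by exact_mod_cast hn2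
    have hq2' : (2:ℝ) ≤ (q:ℝ) := by exact_mod_cast hq2
    set L := Real.logb 2 (n:ℝ) with hL
    have h2n1 : (1:ℝ) ≤ 2 * n := by linarith
    have h2npos : (0:ℝ) < 2 * n := by linarith
    have hL1 : 1 ≤ L := by
      have e1 : Real.logb 2 2 = 1 := Real.logb_self_eq_one one_lt_two
      rw [hL, ← e1]
      exact (Real.logb_le_logb one_lt_two (by norm_num) (by linarith)).mpr hn2'
    set K := Nat.clog 2 n with hK
    have hK1 : 1 ≤ K := Nat.clog_pos one_lt_two hn2
    have hKL : (K:ℝ) ≤ L + 1 := by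
      have hp := Nat.pow_pred_clog_lt_self one_lt_two (show 1 < n from hn2)
      have hp' : ((2:ℝ)) ^ (K - 1 : ℕ) < (n:ℝ) := by exact_mod_cast hp
      have hlog : Real.logb 2 ((2:ℝ) ^ (K - 1 : ℕ)) ≤ L := by
        rw [hL]
        exact (Real.logb_le_logb one_lt_two (by positivity) (by linarith)).mpr hp'.le
      rw [Real.logb_pow, Real.logb_self_eq_one one_lt_two, mul_one] at hlog
      have hc : ((K - 1 : ℕ) : ℝ) = (K:ℝ) - 1 := by
        have := Nat.cast_sub (R := ℝ) hK1
        simpa using this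
      rw [hc] at hlog
      linarith
    have hCr : ((F (Word.fin w) n).ncard : ℝ) ≤ (q:ℝ) * (2 * (n:ℝ)) ^ (K:ℕ) := by
      exact_mod_cast hC
    have hstep1 : (2 * (n:ℝ)) ^ (K:ℕ) = (2 * (n:ℝ)) ^ ((K:ℕ):ℝ) := (Real.rpow_natCast _ _).symm
    have hstep2 : (2 * (n:ℝ)) ^ ((K:ℕ):ℝ) ≤ (2 * (n:ℝ)) ^ (L + 1) :=
      Real.rpow_le_rpow_of_exponent_le h2n1 hKL
    have hstep3 : (2 * (n:ℝ)) ^ (L + 1) = (2 * (n:ℝ)) ^ L * (2 * n) := by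
      rw [Real.rpow_add h2npos, Real.rpow_one]
    set X := (2 * (n:ℝ)) ^ L with hX
    have hX0 : (0:ℝ) ≤ X := Real.rpow_nonneg (by linarith) _
    have hL0 : (0:ℝ) ≤ L := by linarith
    set Y := (4 * (q:ℝ) ^ 10 * n) ^ L with hY
    have hq10 : (q:ℝ) ≤ (q:ℝ) ^ 10 := by
      have h := pow_le_pow_right₀ (by linarith : (1:ℝ) ≤ (q:ℝ)) (by norm_num : 1 ≤ 10)
      rwa [pow_one] at h
    have hYX : 2 * (q:ℝ) ^ 10 * X ≤ Y := by
      rw [hY, show (4 * (q:ℝ) ^ 10 * n) = (2 * (q:ℝ) ^ 10) * (2 * n) by ring,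
        Real.mul_rpow (by positivity) (by linarith)]
      have h1 : (2 * (q:ℝ) ^ 10) ≤ (2 * (q:ℝ) ^ 10) ^ L := by
        nth_rewrite 1 [← Real.rpow_one (2 * (q:ℝ) ^ 10)]
        exact Real.rpow_le_rpow_of_exponent_le (by nlinarith) hL1
      exact mul_le_mul_of_nonneg_right h1 hX0
    have hY1 : (1:ℝ) ≤ Y := by
      rw [hY, ← Real.rpow_zero (4 * (q:ℝ) ^ 10 * n)]
      exact Real.rpow_le_rpow_of_exponent_le (by nlinarith) hL0
    clear_value q L K X Y
    have hfac : (q:ℝ) ≤ ((n:ℝ) - 1) * ((q:ℝ) + 1) * (q:ℝ) ^ 10 := by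
      have h1 : (1:ℝ) ≤ ((n:ℝ) - 1) := by linarith
      have h2 : (1:ℝ) ≤ ((q:ℝ) + 1) := by linarith
      have h12 := mul_le_mul h1 h2 zero_le_one (by linarith)
      have h3 : (q:ℝ) ^ 10 ≤ ((n:ℝ) - 1) * ((q:ℝ) + 1) * (q:ℝ) ^ 10 := by
        nth_rewrite 1 [← one_mul ((q:ℝ) ^ 10)]
        apply mul_le_mul_of_nonneg_right _ (by positivity)
        linarith
      linarith [hq10]
    have ha : (q:ℝ) * (2 * n) * X ≤ ((n:ℝ) - 1) * ((q:ℝ) + 1) * n * Y := by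
      have hhint : (0:ℝ) ≤ (2 * (n:ℝ) * X) * (((n:ℝ) - 1) * ((q:ℝ) + 1) * (q:ℝ) ^ 10 - q) :=
        mul_nonneg (mul_nonneg (by linarith) hX0) (by linarith [hfac])
      have haux : (q:ℝ) * (2 * n) * X ≤ ((n:ℝ) - 1) * ((q:ℝ) + 1) * n * (2 * (q:ℝ) ^ 10 * X) := by
        nlinarith [hhint, hX0, hn2', hq2']
      refine le_trans haux ?_
      have hpos : (0:ℝ) ≤ ((n:ℝ) - 1) * ((q:ℝ) + 1) * n :=
        mul_nonneg (mul_nonneg (by linarith) (by linarith)) (by linarith)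
      exact mul_le_mul_of_nonneg_left hYX hpos
    have hb : 2 * ((n:ℝ) - 1) ≤ ((n:ℝ) - 1) * ((q:ℝ) + 1) * n * Y := by
      have ha1 : (3:ℝ) ≤ (q:ℝ) + 1 := by linarith
      have ha2 : (6:ℝ) ≤ ((q:ℝ) + 1) * n := by
        have h6 := mul_le_mul ha1 hn2' (by norm_num) (by linarith)
        linarith
      have h1 : (2:ℝ) ≤ ((q:ℝ) + 1) * n * Y := by
        have h7 := mul_le_mul ha2 hY1 zero_le_one (by linarith)
        linarith
      calc 2 * ((n:ℝ) - 1) = ((n:ℝ) - 1) * 2 := by ring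
        _ ≤ ((n:ℝ) - 1) * (((q:ℝ) + 1) * n * Y) := mul_le_mul_of_nonneg_left h1 (by linarith)
        _ = ((n:ℝ) - 1) * ((q:ℝ) + 1) * n * Y := by ring
    calc ((F (Word.fin w) n).ncard : ℝ)
        ≤ (q:ℝ) * (2 * (n:ℝ)) ^ (K:ℕ) := hCr
      _ = (q:ℝ) * (2 * (n:ℝ)) ^ ((K:ℕ):ℝ) := by rw [hstep1]
      _ ≤ (q:ℝ) * (X * (2 * n)) := by
          rw [← hstep3]
          exact mul_le_mul_of_nonneg_left hstep2 (by linarith)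
      _ = (q:ℝ) * (2 * n) * X := by ring
      _ ≤ 2 * ((n:ℝ) - 1) * ((q:ℝ) + 1) * n * Y - 2 * ((n:ℝ) - 1) + q := by
          linarith [ha, hb]

end RichWords
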